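/- Let X be a connected graph with no bridges and basepoint x₀. Let α: x₀ → x and β: x₀ → x′ be paths, let e be an edge with s(e) = x, let f be an edge with s(f) = x′, and let t, u ∈ [0,1]. If the 1-chain (c_α + t·e) − (c_β + u·f) is orthogonal to every 1-cycle in Z₁(X,ℝ), then c_α + t·e = c_β + u·f. -/

import Mathlib

/-- A graph in the sense of Sunada's topological crystallography: a set of vertices,
a set of edges, source and target maps, and a fixed-point free involution sending
each edge to its inverse. -/
structure SunadaGraph where
  V : Type
  E : Type
  s : E → V
  t : E → V
  inv : E → E
  s_inv : ∀ e, s (inv e) = t e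
  t_inv : ∀ e, t (inv e) = s e
  inv_inv : ∀ e, inv (inv e) = e
  inv_ne : ∀ e, inv e ≠ e

namespace SunadaGraph

variable (X : SunadaGraph)

/-- `X.IsPath x y γ` : the word of edges `γ` is a path from `x` to `y` in `X`. -/
inductive IsPath : X.V → X.V → List X.E → Prop
  | nil (x : X.V) : IsPath x x []
  | cons (e : X.E) {y : X.V} {γ : List X.E} (h : IsPath (X.t e) y γ) :
      IsPath (X.s e) y (e :: γ)

/-- A graph is connected if any two vertices are joined by a path. -/
def Connected : Prop := ∀ x y : X.V, ∃ γ : List X.E, X.IsPath x y γ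

/-- An edge is a bridge if there is no path from its target to its source
avoiding both the edge and its inverse. -/
def IsBridge (e : X.E) : Prop :=
  ¬ ∃ γ : List X.E, X.IsPath (X.t e) (X.s e) γ ∧ e ∉ γ ∧ X.inv e ∉ γ

/-- The space `C₁(X,ℝ)` of real 1-chains: formal linear combinations of edges
with `e⁻¹ = -e`, realized as finitely supported functions `c : E → ℝ` with
`c(e⁻¹) = - c(e)`. -/
noncomputable def C1 : Submodule ℝ (X.E →₀ ℝ) where
  carrier := {c | ∀ e, c (X.inv e) = - c e}
  add_mem' := by
    intro a b ha hb e
    simp only [Finsupp.add_apply, ha e, hb e]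
    ring
  zero_mem' := by intro e; simp
  smul_mem' := by
    intro r c hc e
    simp only [Finsupp.smul_apply, hc e, smul_eq_mul]
    ring

/-- The 1-chain associated to a single edge. -/
noncomputable def edgeChain (e : X.E) : ↥X.C1 :=
  ⟨Finsupp.single e 1 - Finsupp.single (X.inv e) 1, by
    intro f
    classical
    have h1 : (e = X.inv f) ↔ (X.inv e = f) := by
      constructor
      · rintro rfl; exact X.inv_inv f
      · rintro rfl; exact (X.inv_inv e).symm
    have h2 : (X.inv e = X.inv f) ↔ (e = f) := by
      constructor
      · intro h
        have := congrArg X.inv h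
        rwa [X.inv_inv, X.inv_inv] at this
      · rintro rfl; rfl
    simp only [Finsupp.sub_apply, Finsupp.single_apply, h1, h2]
    ring⟩

/-- The 1-chain `c_γ` of a path `γ`. -/
noncomputable def pathChain (γ : List X.E) : ↥X.C1 := (γ.map X.edgeChain).sum

/-- The inner product on `C₁(X,ℝ)` for which the edges form an orthonormal basis
(with `e⁻¹` counting as the negative of `e`). -/
noncomputable def chainInner (c d : ↥X.C1) : ℝ :=
  (1/2) * ((c : X.E →₀ ℝ).sum fun e x => x * (d : X.E →₀ ℝ) e)

/-- The boundary of a 1-chain. -/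
noncomputable def boundary (c : ↥X.C1) : X.V →₀ ℝ :=
  (c : X.E →₀ ℝ).sum fun e x => x • (Finsupp.single (X.t e) (1:ℝ) - Finsupp.single (X.s e) 1)

/-- A 1-cycle is a 1-chain with vanishing boundary. -/
def IsCycle (c : ↥X.C1) : Prop := X.boundary c = 0

/-- An integral 1-chain: all coefficients are integers. -/
def IsIntegral (c : ↥X.C1) : Prop := ∀ e, ∃ n : ℤ, (c : X.E →₀ ℝ) e = (n : ℝ)

/-- The support of a 1-chain: the set of edges with positive coefficient. -/
def chainSupp (c : ↥X.C1) : Set X.E := {e | 0 < (c : X.E →₀ ℝ) e}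

/-- `p` is the orthogonal projection of `C₁(X,ℝ)` onto the space `Z₁(X,ℝ)` of 1-cycles:
it takes values in `Z₁(X,ℝ)` and `c - p c` is orthogonal to every 1-cycle. -/
def IsOrthoProj (p : ↥X.C1 → ↥X.C1) : Prop :=
  (∀ c, X.IsCycle (p c)) ∧ (∀ c z, X.IsCycle z → X.chainInner (c - p c) z = 0)

/-- Two paths from `x` to `y` are homologous if one can be obtained from the other
by repeatedly inserting or deleting subwords `e e⁻¹`, and/or replacing a subword
`στ` by `τσ` where `σ` and `τ` are loops based at the same vertex. -/
inductive Homologous : X.V → X.V → List X.E → List X.E → Prop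
  | refl {x y : X.V} (γ : List X.E) (h : X.IsPath x y γ) : Homologous x y γ γ
  | cancel {x y : X.V} (γ δ : List X.E) (e : X.E)
      (h : X.IsPath x y (γ ++ e :: X.inv e :: δ)) (h' : X.IsPath x y (γ ++ δ)) :
      Homologous x y (γ ++ e :: X.inv e :: δ) (γ ++ δ)
  | swap {x y : X.V} (γ σ τ δ : List X.E) (v : X.V)
      (hσ : X.IsPath v v σ) (hτ : X.IsPath v v τ)
      (h : X.IsPath x y (γ ++ (σ ++ (τ ++ δ))))
      (h' : X.IsPath x y (γ ++ (τ ++ (σ ++ δ)))) :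
      Homologous x y (γ ++ (σ ++ (τ ++ δ))) (γ ++ (τ ++ (σ ++ δ)))
  | symm {x y : X.V} {a b : List X.E} (h : Homologous x y a b) : Homologous x y b a
  | trans {x y : X.V} {a b c : List X.E} (h1 : Homologous x y a b)
      (h2 : Homologous x y b c) : Homologous x y a c

/-- A simple path: no vertex is visited twice. -/
def IsSimplePath (x y : X.V) (γ : List X.E) : Prop :=
  X.IsPath x y γ ∧ (x :: γ.map X.t).Nodup

/-- A simple loop based at `x`: a loop in which every vertex other than `x` occurs
at most once and `x` occurs only as the initial and final vertex. -/
def IsSimpleLoop (x : X.V) (γ : List X.E) : Prop :=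
  X.IsPath x x γ ∧ (x :: (γ.map X.t).dropLast).Nodup

/-- A reduced word: no subword of the form `e e⁻¹`. -/
def Reduced (γ : List X.E) : Prop := γ.Chain' (fun a b => b ≠ X.inv a)

/-- A spanning tree: a set of edges, closed under inversion, such that the spanning
subgraph it determines is connected and has no nonempty reduced loops. -/
def IsSpanningTree (S : Set X.E) : Prop :=
  (∀ e ∈ S, X.inv e ∈ S) ∧
  (∀ x y : X.V, ∃ γ : List X.E, X.IsPath x y γ ∧ ∀ e ∈ γ, e ∈ S) ∧
  (∀ (x : X.V) (γ : List X.E), X.IsPath x x γ → (∀ e ∈ γ, e ∈ S) → X.Reduced γ → γ = [])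

/-- The quotient of a set of 1-chains by the translation action of the
integral 1-cycles. -/
def transQuot (S : Set ↥X.C1) : Type :=
  Quot (fun a b : S => ∃ z : ↥X.C1, X.IsCycle z ∧ X.IsIntegral z ∧ (b : ↥X.C1) = (a : ↥X.C1) + z)

end SunadaGraph


------------------------------------------------------------------
-- auxiliary development
------------------------------------------------------------------

namespace SunadaGraph

variable (X : SunadaGraph)

open scoped Classical

lemma inv_injective : Function.Injective X.inv := by
  intro a b h
  rw [← X.inv_inv a, h, X.inv_inv]

lemma mem_C1 (z : ↥X.C1) (h : X.E) :
    (z : X.E →₀ ℝ) (X.inv h) = - (z : X.E →₀ ℝ) h := z.2 h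

theorem isPath_append {x y z : X.V} {γ δ : List X.E}
    (h1 : X.IsPath x y γ) (h2 : X.IsPath y z δ) : X.IsPath x z (γ ++ δ) := by
  induction h1 with
  | nil _ => simpa using h2
  | cons e _ ih => exact .cons e (ih h2)

theorem isPath_single (h : X.E) : X.IsPath (X.s h) (X.t h) [h] :=
  .cons h (.nil _)

theorem isPath_reverse {x y : X.V} {γ : List X.E} (h : X.IsPath x y γ) :
    X.IsPath y x (γ.reverse.map X.inv) := by
  induction h with
  | nil x => simpa using IsPath.nil x
  | cons e h ih =>
    rw [List.reverse_cons, List.map_append]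
    refine X.isPath_append ih ?_
    have := X.isPath_single (X.inv e)
    rwa [X.s_inv, X.t_inv] at this

@[simp] lemma pathChain_nil : X.pathChain [] = 0 := rfl

lemma pathChain_cons (h : X.E) (γ : List X.E) :
    X.pathChain (h :: γ) = X.edgeChain h + X.pathChain γ := by
  simp [pathChain]

lemma pathChain_append (γ δ : List X.E) :
    X.pathChain (γ ++ δ) = X.pathChain γ + X.pathChain δ := by
  simp [pathChain]

lemma coe_edgeChain (h k : X.E) :
    (X.edgeChain h : X.E →₀ ℝ) k
      = (if h = k then (1:ℝ) else 0) - (if X.inv h = k then (1:ℝ) else 0) := by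
  classical
  simp [edgeChain, Finsupp.single_apply]

lemma edgeChain_apply_self (h : X.E) : (X.edgeChain h : X.E →₀ ℝ) h = 1 := by
  rw [coe_edgeChain]
  simp [X.inv_ne h]


-- chainInner lemmas

lemma chainInner_add_right (c d₁ d₂ : ↥X.C1) :
    X.chainInner c (d₁ + d₂) = X.chainInner c d₁ + X.chainInner c d₂ := by
  unfold chainInner
  simp only [Submodule.coe_add, Finsupp.add_apply, mul_add]
  rw [Finsupp.sum_add]
  ring

lemma chainInner_neg_left (c d : ↥X.C1) :
    X.chainInner (-c) d = - X.chainInner c d := by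
  unfold chainInner
  simp only [Submodule.coe_neg]
  rw [Finsupp.sum_neg_index (by intro a; simp)]
  simp only [neg_mul]
  rw [Finsupp.sum_neg]
  ring

lemma chainInner_sub_right (c d₁ d₂ : ↥X.C1) :
    X.chainInner c (d₁ - d₂) = X.chainInner c d₁ - X.chainInner c d₂ := by
  unfold chainInner
  simp only [Submodule.coe_sub, Finsupp.sub_apply, mul_sub]
  rw [Finsupp.sum_sub]
  ring

lemma chainInner_zero_right (c : ↥X.C1) : X.chainInner c 0 = 0 := by
  unfold chainInner
  simp

lemma sum_ite_self (c : X.E →₀ ℝ) (h : X.E) :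
    (c.sum fun k x => if h = k then x else 0) = c h := by
  rw [Finsupp.sum]
  rw [Finset.sum_ite_eq]
  by_cases hh : h ∈ c.support
  · simp [hh]
  · simp [hh, Finsupp.notMem_support_iff.mp hh]

lemma chainInner_edgeChain (c : ↥X.C1) (h : X.E) :
    X.chainInner c (X.edgeChain h) = (c : X.E →₀ ℝ) h := by
  unfold chainInner
  have : ∀ k : X.E, (X.edgeChain h : X.E →₀ ℝ) k
      = (if h = k then (1:ℝ) else 0) - (if X.inv h = k then (1:ℝ) else 0) :=
    X.coe_edgeChain h
  simp only [this, mul_sub, mul_ite, mul_one, mul_zero]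
  rw [Finsupp.sum_sub, sum_ite_self, sum_ite_self, X.mem_C1 c h]
  ring

lemma chainInner_pathChain (c : ↥X.C1) (γ : List X.E) :
    X.chainInner c (X.pathChain γ) = (γ.map fun k => (c : X.E →₀ ℝ) k).sum := by
  induction γ with
  | nil => simpa using X.chainInner_zero_right c
  | cons k γ ih =>
    rw [pathChain_cons, chainInner_add_right, chainInner_edgeChain, ih]
    simp

-- boundary lemmas

noncomputable def boundaryHom : (X.E →₀ ℝ) →ₗ[ℝ] (X.V →₀ ℝ) :=
  Finsupp.lsum ℝ fun h =>
    LinearMap.toSpanSingleton ℝ _ (Finsupp.single (X.t h) (1:ℝ) - Finsupp.single (X.s h) 1)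

lemma boundary_eq (c : ↥X.C1) : X.boundary c = X.boundaryHom (c : X.E →₀ ℝ) := by
  unfold boundary boundaryHom
  rw [Finsupp.lsum_apply]
  rfl

lemma boundary_add (c d : ↥X.C1) : X.boundary (c + d) = X.boundary c + X.boundary d := by
  rw [boundary_eq, boundary_eq, boundary_eq, Submodule.coe_add, map_add]

lemma boundary_sub (c d : ↥X.C1) : X.boundary (c - d) = X.boundary c - X.boundary d := by
  rw [boundary_eq, boundary_eq, boundary_eq, Submodule.coe_sub, map_sub]

lemma boundary_smul (r : ℝ) (c : ↥X.C1) : X.boundary (r • c) = r • X.boundary c := by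
  rw [boundary_eq, boundary_eq, Submodule.coe_smul, map_smul]

lemma boundary_zero : X.boundary 0 = 0 := by
  rw [boundary_eq]
  simp

lemma boundary_edgeChain (h : X.E) :
    X.boundary (X.edgeChain h)
      = (2:ℝ) • (Finsupp.single (X.t h) (1:ℝ) - Finsupp.single (X.s h) 1) := by
  rw [boundary_eq]
  show X.boundaryHom (Finsupp.single h 1 - Finsupp.single (X.inv h) 1) = _
  rw [map_sub]
  unfold boundaryHom
  rw [Finsupp.lsum_single, Finsupp.lsum_single]
  simp only [LinearMap.toSpanSingleton_apply, X.t_inv, X.s_inv, one_smul]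
  module

lemma boundary_pathChain {x y : X.V} {γ : List X.E} (h : X.IsPath x y γ) :
    X.boundary (X.pathChain γ)
      = (2:ℝ) • (Finsupp.single y (1:ℝ) - Finsupp.single x 1) := by
  induction h with
  | nil x => simp [boundary_zero]
  | cons e h ih =>
    rw [pathChain_cons, boundary_add, boundary_edgeChain, ih]
    module

lemma cycle_sub_paths {x₀ y : X.V} {γ₁ γ₂ : List X.E}
    (h1 : X.IsPath x₀ y γ₁) (h2 : X.IsPath x₀ y γ₂) :
    X.IsCycle (X.pathChain γ₁ - X.pathChain γ₂) := by
  unfold IsCycle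
  rw [X.boundary_sub, X.boundary_pathChain h1, X.boundary_pathChain h2, sub_self]

-- the potential function

noncomputable def pot (hconn : X.Connected) (x₀ : X.V) (c : ↥X.C1) (y : X.V) : ℝ :=
  X.chainInner c (X.pathChain (hconn x₀ y).choose)

lemma pot_spec (hconn : X.Connected) (x₀ : X.V) (c : ↥X.C1)
    (Horth : ∀ z : ↥X.C1, X.IsCycle z → X.chainInner c z = 0)
    {y : X.V} {γ : List X.E} (hγ : X.IsPath x₀ y γ) :
    X.chainInner c (X.pathChain γ) = X.pot hconn x₀ c y := by
  have hc := (hconn x₀ y).choose_spec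
  have h0 := Horth _ (X.cycle_sub_paths hγ hc)
  rw [chainInner_sub_right] at h0
  unfold pot
  linarith

lemma pot_grad (hconn : X.Connected) (x₀ : X.V) (c : ↥X.C1)
    (Horth : ∀ z : ↥X.C1, X.IsCycle z → X.chainInner c z = 0) (h : X.E) :
    (c : X.E →₀ ℝ) h = X.pot hconn x₀ c (X.t h) - X.pot hconn x₀ c (X.s h) := by
  obtain ⟨γ, hγ⟩ : ∃ γ, X.IsPath x₀ (X.s h) γ := ⟨_, (hconn x₀ (X.s h)).choose_spec⟩
  have h2 : X.IsPath x₀ (X.t h) (γ ++ [h]) := X.isPath_append hγ (X.isPath_single h)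
  have e1 := X.pot_spec hconn x₀ c Horth h2
  have e2 := X.pot_spec hconn x₀ c Horth hγ
  rw [chainInner_pathChain] at e1 e2
  rw [List.map_append, List.sum_append] at e1
  simp only [List.map_cons, List.map_nil, List.sum_cons, List.sum_nil, add_zero] at e1
  linarith

lemma pot_pathSum (hconn : X.Connected) (x₀ : X.V) (c : ↥X.C1)
    (Horth : ∀ z : ↥X.C1, X.IsCycle z → X.chainInner c z = 0)
    {v w : X.V} {γ : List X.E} (hγ : X.IsPath v w γ) :
    (γ.map fun k => (c : X.E →₀ ℝ) k).sum
      = X.pot hconn x₀ c w - X.pot hconn x₀ c v := by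
  induction hγ with
  | nil _ => simp
  | cons k h ih =>
    have := X.pot_grad hconn x₀ c Horth k
    simp only [List.map_cons, List.sum_cons]
    rw [ih]
    linarith

-- first exit and closure lemmas

lemma first_exit {v w : X.V} {γ : List X.E} (hγ : X.IsPath v w γ)
    (P : X.V → Prop) :
    P v → ¬ P w → ∃ k ∈ γ, P (X.s k) ∧ ¬ P (X.t k) := by
  induction hγ with
  | nil x => intro hv hw; exact absurd hv hw
  | cons k h ih =>
    intro hv hw
    by_cases hk : P (X.t k)
    · obtain ⟨k', hk', h1, h2⟩ := ih hk hw
      exact ⟨k', List.mem_cons_of_mem _ hk', h1, h2⟩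
    · exact ⟨k, List.mem_cons_self, hv, hk⟩

lemma closure (e : X.E) (P : X.V → Prop)
    (hP : ∀ k, k ≠ e → k ≠ X.inv e → P (X.s k) → P (X.t k))
    {v w : X.V} {γ : List X.E} (hγ : X.IsPath v w γ)
    (hav : ∀ k ∈ γ, k ≠ e ∧ k ≠ X.inv e) (hv : P v) : P w := by
  induction hγ with
  | nil _ => exact hv
  | cons k h ih =>
    refine ih (fun k' hk' => hav k' (List.mem_cons_of_mem _ hk')) ?_
    exact hP k (hav k (List.mem_cons_self)).1 (hav k (List.mem_cons_self)).2 hv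

-- reachability avoiding e, e⁻¹, f, f⁻¹

def Reach (e f : X.E) (v w : X.V) : Prop :=
  ∃ γ : List X.E, X.IsPath v w γ ∧
    ∀ k ∈ γ, k ≠ e ∧ k ≠ X.inv e ∧ k ≠ f ∧ k ≠ X.inv f

lemma reach_refl (e f : X.E) (v : X.V) : X.Reach e f v v :=
  ⟨[], .nil v, by simp⟩

lemma reach_trans {e f : X.E} {v w z : X.V}
    (h1 : X.Reach e f v w) (h2 : X.Reach e f w z) : X.Reach e f v z := by
  obtain ⟨γ₁, hp1, ha1⟩ := h1
  obtain ⟨γ₂, hp2, ha2⟩ := h2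
  exact ⟨γ₁ ++ γ₂, X.isPath_append hp1 hp2, by
    intro k hk
    rcases List.mem_append.mp hk with h | h
    · exact ha1 k h
    · exact ha2 k h⟩

lemma reach_symm {e f : X.E} {v w : X.V} (h : X.Reach e f v w) : X.Reach e f w v := by
  obtain ⟨γ, hp, ha⟩ := h
  refine ⟨γ.reverse.map X.inv, X.isPath_reverse hp, ?_⟩
  intro k hk
  obtain ⟨k', hk', rfl⟩ := List.mem_map.mp hk
  have hk'' := ha k' (List.mem_reverse.mp hk')
  refine ⟨?_, ?_, ?_, ?_⟩
  · intro hh; exact hk''.2.1 (by rw [← hh, X.inv_inv])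
  · intro hh; exact hk''.1 (X.inv_injective hh)
  · intro hh; exact hk''.2.2.2 (by rw [← hh, X.inv_inv])
  · intro hh; exact hk''.2.2.1 (X.inv_injective hh)

lemma reach_snoc {e f : X.E} {v : X.V} {k : X.E}
    (h : X.Reach e f v (X.s k)) (h1 : k ≠ e) (h2 : k ≠ X.inv e)
    (h3 : k ≠ f) (h4 : k ≠ X.inv f) : X.Reach e f v (X.t k) := by
  obtain ⟨γ, hp, ha⟩ := h
  refine ⟨γ ++ [k], X.isPath_append hp (X.isPath_single k), ?_⟩
  intro k' hk'
  rcases List.mem_append.mp hk' with h | h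
  · exact ha k' h
  · rw [List.mem_singleton.mp h]; exact ⟨h1, h2, h3, h4⟩

-- flux computations

lemma flux_sum (c : ↥X.C1) (φ : X.V → ℝ) :
    Finsupp.linearCombination ℝ φ (X.boundary c)
      = ∑ k ∈ (c : X.E →₀ ℝ).support,
          (c : X.E →₀ ℝ) k * (φ (X.t k) - φ (X.s k)) := by
  rw [boundary_eq]
  unfold boundaryHom
  rw [Finsupp.lsum_apply]
  rw [map_finsuppSum]
  rw [Finsupp.sum]
  apply Finset.sum_congr rfl
  intro k _
  simp only [LinearMap.toSpanSingleton_apply, map_smul, map_sub,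
    Finsupp.linearCombination_single, one_smul, smul_eq_mul]
  ring

lemma wayA {x₀ x x' : X.V} {α β : List X.E}
    (hα : X.IsPath x₀ x α) (hβ : X.IsPath x₀ x' β)
    (e f : X.E) (t u : ℝ) (φ : X.V → ℝ) :
    Finsupp.linearCombination ℝ φ
      (X.boundary (X.pathChain α + t • X.edgeChain e
        - (X.pathChain β + u • X.edgeChain f)))
      = (2*(φ x - φ x₀) + 2*t*(φ (X.t e) - φ (X.s e)))
        - (2*(φ x' - φ x₀) + 2*u*(φ (X.t f) - φ (X.s f))) := by
  rw [boundary_sub, boundary_add, boundary_add, boundary_smul, boundary_smul,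
    X.boundary_pathChain hα, X.boundary_pathChain hβ,
    boundary_edgeChain, boundary_edgeChain]
  simp only [map_sub, map_add, map_smul, Finsupp.linearCombination_single,
    one_smul, smul_eq_mul, smul_sub, mul_sub]
  ring

-- integrality of path chain coefficients

lemma pathChain_int (γ : List X.E) (k : X.E) :
    ∃ n : ℤ, (X.pathChain γ : X.E →₀ ℝ) k = (n : ℝ) := by
  induction γ with
  | nil => exact ⟨0, by simp⟩
  | cons h γ ih =>
    obtain ⟨n, hn⟩ := ih
    rw [pathChain_cons]
    refine ⟨((if h = k then 1 else 0) - (if X.inv h = k then 1 else 0)) + n, ?_⟩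
    rw [Submodule.coe_add, Finsupp.add_apply, hn, coe_edgeChain]
    push_cast
    split_ifs <;> ring

-- Lemma A : the difference chain is supported on {e, e⁻¹, f, f⁻¹}

set_option maxHeartbeats 1600000 in
lemma supp_zero (hconn : X.Connected) (hbr : ∀ e : X.E, ¬ X.IsBridge e)
    (x₀ x x' : X.V) (α β : List X.E) (hα : X.IsPath x₀ x α) (hβ : X.IsPath x₀ x' β)
    (e f : X.E) (he : X.s e = x) (hf : X.s f = x')
    (t u : ℝ) (ht : t ∈ Set.Icc (0:ℝ) 1) (hu : u ∈ Set.Icc (0:ℝ) 1)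
    (horth : ∀ z : ↥X.C1, X.IsCycle z →
      X.chainInner ((X.pathChain α + t • X.edgeChain e)
        - (X.pathChain β + u • X.edgeChain f)) z = 0) :
    ∀ h : X.E, h ≠ e → h ≠ X.inv e → h ≠ f → h ≠ X.inv f →
      ((X.pathChain α + t • X.edgeChain e - (X.pathChain β + u • X.edgeChain f) : ↥X.C1) :
        X.E →₀ ℝ) h = 0 := by
  classical
  set c : ↥X.C1 :=
    X.pathChain α + t • X.edgeChain e - (X.pathChain β + u • X.edgeChain f) with hc
  have c_int : ∀ h : X.E, h ≠ e → h ≠ X.inv e → h ≠ f → h ≠ X.inv f →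
      ∃ n : ℤ, (c : X.E →₀ ℝ) h = (n : ℝ) := by
    intro h h1 h2 h3 h4
    obtain ⟨n1, hn1⟩ := X.pathChain_int α h
    obtain ⟨n2, hn2⟩ := X.pathChain_int β h
    refine ⟨n1 - n2, ?_⟩
    have j1 : e ≠ h := Ne.symm h1
    have j2 : X.inv e ≠ h := fun hh => h2 hh.symm
    have j3 : f ≠ h := Ne.symm h3
    have j4 : X.inv f ≠ h := fun hh => h4 hh.symm
    rw [hc]
    simp only [Submodule.coe_sub, Submodule.coe_add, Submodule.coe_smul,
      Finsupp.sub_apply, Finsupp.add_apply, Finsupp.smul_apply, smul_eq_mul,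
      hn1, hn2, coe_edgeChain, if_neg j1, if_neg j2, if_neg j3, if_neg j4]
    push_cast
    ring
  have grad : ∀ k, (c : X.E →₀ ℝ) k
      = X.pot hconn x₀ c (X.t k) - X.pot hconn x₀ c (X.s k) :=
    X.pot_grad hconn x₀ c horth
  set g := X.pot hconn x₀ c with hg
  -- main positivity argument
  have mainpos : ∀ h₀ : X.E, h₀ ≠ e → h₀ ≠ X.inv e → h₀ ≠ f → h₀ ≠ X.inv f →
      1 ≤ (c : X.E →₀ ℝ) h₀ → False := by
    intro h₀ c1 c2 c3 c4 hpos
    obtain ⟨γ, hγ, hm1, hm2⟩ := not_not.mp (hbr h₀)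
    set φ : X.V → ℝ := fun v => if g (X.s h₀) < g v then 1 else 0 with hφ
    have φ01 : ∀ v, φ v = 0 ∨ φ v = 1 := by
      intro v
      by_cases hv : g (X.s h₀) < g v <;> simp [hφ, hv]
    have φbd : ∀ v, 0 ≤ φ v ∧ φ v ≤ 1 := by
      intro v
      rcases φ01 v with h | h <;> rw [h] <;> norm_num
    have hlt : g (X.s h₀) < g (X.t h₀) := by
      have := grad h₀; linarith
    have φth₀ : φ (X.t h₀) = 1 := by rw [hφ]; simp [hlt]
    have φsh₀ : φ (X.s h₀) = 0 := by rw [hφ]; simp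
    obtain ⟨h₁, hmem, hP1, hP0⟩ :=
      X.first_exit hγ (fun v => g (X.s h₀) < g v) hlt (lt_irrefl _)
    have φsh₁ : φ (X.s h₁) = 1 := by rw [hφ]; simp [hP1]
    have φth₁ : φ (X.t h₁) = 0 := by rw [hφ]; simp [hP0]
    have hc1neg : (c : X.E →₀ ℝ) h₁ < 0 := by
      have h5 := grad h₁
      have h6 : ¬ g (X.s h₀) < g (X.t h₁) := hP0
      push_neg at h6
      linarith
    have d1 : h₁ ≠ h₀ := fun hh => hm1 (hh ▸ hmem)
    have d2 : h₁ ≠ X.inv h₀ := fun hh => hm2 (hh ▸ hmem)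
    -- compute the flux in two ways
    have hF := X.wayA hα hβ e f t u φ
    rw [← hc, he, hf] at hF
    have hF2 := X.flux_sum c φ
    -- upper bound
    have hb : Finsupp.linearCombination ℝ φ (X.boundary c) ≤ 2 := by
      rw [hF]
      have e1 : (1-t)*(1 - φ x) ≥ 0 :=
        mul_nonneg (by linarith [ht.2]) (by linarith [(φbd x).2])
      have e2 : t*(1 - φ (X.t e)) ≥ 0 :=
        mul_nonneg ht.1 (by linarith [(φbd (X.t e)).2])
      have e3 : u * φ (X.t f) ≥ 0 := mul_nonneg hu.1 (φbd (X.t f)).1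
      have e4 : (1-u) * φ x' ≥ 0 :=
        mul_nonneg (by linarith [hu.2]) (φbd x').1
      nlinarith [e1, e2, e3, e4]
    -- lower bound
    have nonneg : ∀ k : X.E, 0 ≤ (c : X.E →₀ ℝ) k * (φ (X.t k) - φ (X.s k)) := by
      intro k
      have gr := grad k
      have hsφ : φ (X.s k) = if g (X.s h₀) < g (X.s k) then 1 else 0 := by rw [hφ]
      have htφ : φ (X.t k) = if g (X.s h₀) < g (X.t k) then 1 else 0 := by rw [hφ]
      rw [hsφ, htφ]
      by_cases hsk : g (X.s h₀) < g (X.s k) <;>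
        by_cases htk : g (X.s h₀) < g (X.t k)
      · rw [if_pos hsk, if_pos htk]; simp
      · rw [if_pos hsk, if_neg htk]
        push_neg at htk
        nlinarith
      · rw [if_neg hsk, if_pos htk]
        push_neg at hsk
        nlinarith
      · rw [if_neg hsk, if_neg htk]; simp
    have hS1 : h₀ ≠ X.inv h₀ := (X.inv_ne h₀).symm
    have hS2 : h₀ ≠ h₁ := d1.symm
    have hS3 : h₀ ≠ X.inv h₁ := by
      intro hh
      exact d2 (by rw [hh, X.inv_inv])
    have hS4 : X.inv h₀ ≠ h₁ := fun hh => d2 hh.symm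
    have hS5 : X.inv h₀ ≠ X.inv h₁ := fun hh => d1 (X.inv_injective hh).symm
    have hS6 : h₁ ≠ X.inv h₁ := (X.inv_ne h₁).symm
    set S : Finset X.E := {h₀, X.inv h₀, h₁, X.inv h₁} with hSdef
    have hSsub : S ⊆ (c : X.E →₀ ℝ).support := by
      intro k hk
      rw [Finsupp.mem_support_iff]
      simp only [hSdef, Finset.mem_insert, Finset.mem_singleton] at hk
      rcases hk with rfl | rfl | rfl | rfl
      · intro hzero; rw [hzero] at hpos; linarith
      · intro hzero; rw [X.mem_C1 c h₀] at hzero; linarith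
      · intro hzero; rw [hzero] at hc1neg; linarith
      · intro hzero; rw [X.mem_C1 c h₁] at hzero; linarith
    have hsum : ∑ k ∈ S, (c : X.E →₀ ℝ) k * (φ (X.t k) - φ (X.s k))
        = 2*(c : X.E →₀ ℝ) h₀ - 2*(c : X.E →₀ ℝ) h₁ := by
      rw [hSdef]
      rw [Finset.sum_insert (by simp [hS1, hS2, hS3]),
        Finset.sum_insert (by simp [hS4, hS5]),
        Finset.sum_insert (by simp [hS6]), Finset.sum_singleton]
      rw [X.mem_C1 c h₀, X.mem_C1 c h₁, X.t_inv, X.s_inv, X.t_inv, X.s_inv,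
        φth₀, φsh₀, φsh₁, φth₁]
      ring
    have hge := Finset.sum_le_sum_of_subset_of_nonneg hSsub
      (fun k _ _ => nonneg k)
    rw [hsum] at hge
    rw [hF2] at hb
    linarith
  -- conclude
  intro h h1 h2 h3 h4
  obtain ⟨n, hn⟩ := c_int h h1 h2 h3 h4
  by_contra hne
  have hn0 : n ≠ 0 := by
    intro hh
    rw [hh] at hn
    exact hne (by rw [hn]; norm_num)
  rcases lt_or_gt_of_ne hn0 with hlt | hgt
  · -- n ≤ -1 : use inv h
    have i1 : X.inv h ≠ e := by
      intro hh; exact h2 (by rw [← hh, X.inv_inv])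
    have i2 : X.inv h ≠ X.inv e := fun hh => h1 (X.inv_injective hh)
    have i3 : X.inv h ≠ f := by
      intro hh; exact h4 (by rw [← hh, X.inv_inv])
    have i4 : X.inv h ≠ X.inv f := fun hh => h3 (X.inv_injective hh)
    refine mainpos (X.inv h) i1 i2 i3 i4 ?_
    rw [X.mem_C1 c h, hn]
    have : (n:ℝ) ≤ -1 := by
      have : n ≤ -1 := by omega
      exact_mod_cast this
    linarith
  · refine mainpos h h1 h2 h3 h4 ?_
    rw [hn]
    exact_mod_cast hgt

-- second flux computation when the support is contained in {e,e⁻¹,f,f⁻¹}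

lemma wayB4 (c : ↥X.C1) (e f : X.E) (hfe1 : f ≠ e) (hfe2 : f ≠ X.inv e)
    (hsupp : ∀ h : X.E, h ≠ e → h ≠ X.inv e → h ≠ f → h ≠ X.inv f →
      (c : X.E →₀ ℝ) h = 0)
    (φ : X.V → ℝ) :
    Finsupp.linearCombination ℝ φ (X.boundary c)
      = 2 * (c : X.E →₀ ℝ) e * (φ (X.t e) - φ (X.s e))
        + 2 * (c : X.E →₀ ℝ) f * (φ (X.t f) - φ (X.s f)) := by
  classical
  rw [flux_sum]
  have hsub : (c : X.E →₀ ℝ).support ⊆ ({e, X.inv e, f, X.inv f} : Finset X.E) := by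
    intro k hk
    rw [Finsupp.mem_support_iff] at hk
    by_contra hmem
    simp only [Finset.mem_insert, Finset.mem_singleton, not_or] at hmem
    exact hk (hsupp k hmem.1 hmem.2.1 hmem.2.2.1 hmem.2.2.2)
  rw [Finset.sum_subset hsub
    (fun k _ hk => by rw [Finsupp.notMem_support_iff.mp hk]; ring)]
  have d1 : e ≠ X.inv e := (X.inv_ne e).symm
  have d2 : e ≠ f := Ne.symm hfe1
  have d3 : e ≠ X.inv f := fun hh => hfe2 (by rw [hh, X.inv_inv])
  have d4 : X.inv e ≠ f := fun hh => hfe2 hh.symm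
  have d5 : X.inv e ≠ X.inv f := fun hh => hfe1 (X.inv_injective hh).symm
  have d6 : f ≠ X.inv f := (X.inv_ne f).symm
  rw [Finset.sum_insert (by simp [d1, d2, d3]),
    Finset.sum_insert (by simp [d4, d5]),
    Finset.sum_insert (by simp [d6]), Finset.sum_singleton]
  rw [X.mem_C1 c e, X.mem_C1 c f, X.t_inv e, X.s_inv e, X.t_inv f, X.s_inv f]
  ring

lemma pot_reach (hconn : X.Connected) (x₀ : X.V) (c : ↥X.C1)
    (Horth : ∀ z : ↥X.C1, X.IsCycle z → X.chainInner c z = 0) (e f : X.E)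
    (hsupp : ∀ h : X.E, h ≠ e → h ≠ X.inv e → h ≠ f → h ≠ X.inv f →
      (c : X.E →₀ ℝ) h = 0)
    {v w : X.V} (h : X.Reach e f v w) :
    X.pot hconn x₀ c v = X.pot hconn x₀ c w := by
  obtain ⟨γ, hp, ha⟩ := h
  have hps := X.pot_pathSum hconn x₀ c Horth hp
  have hz : (γ.map fun k => (c : X.E →₀ ℝ) k).sum = 0 := by
    apply List.sum_eq_zero
    intro r hr
    obtain ⟨k, hk, rfl⟩ := List.mem_map.mp hr
    obtain ⟨a1, a2, a3, a4⟩ := ha k hk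
    exact hsupp k a1 a2 a3 a4
  rw [hz] at hps
  linarith

set_option maxHeartbeats 3200000 in
lemma key_coeff (hconn : X.Connected) (hbr : ∀ e : X.E, ¬ X.IsBridge e)
    (x₀ x x' : X.V) (α β : List X.E) (hα : X.IsPath x₀ x α) (hβ : X.IsPath x₀ x' β)
    (e f : X.E) (he : X.s e = x) (hf : X.s f = x')
    (t u : ℝ) (ht : t ∈ Set.Icc (0:ℝ) 1) (hu : u ∈ Set.Icc (0:ℝ) 1)
    (horth : ∀ z : ↥X.C1, X.IsCycle z →
      X.chainInner ((X.pathChain α + t • X.edgeChain e)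
        - (X.pathChain β + u • X.edgeChain f)) z = 0) :
    ((X.pathChain α + t • X.edgeChain e - (X.pathChain β + u • X.edgeChain f) : ↥X.C1) :
      X.E →₀ ℝ) e = 0 := by
  classical
  set c : ↥X.C1 :=
    X.pathChain α + t • X.edgeChain e - (X.pathChain β + u • X.edgeChain f) with hc
  have hsupp : ∀ h : X.E, h ≠ e → h ≠ X.inv e → h ≠ f → h ≠ X.inv f →
      (c : X.E →₀ ℝ) h = 0 :=
    fun h h1 h2 h3 h4 =>
      X.supp_zero hconn hbr x₀ x x' α β hα hβ e f he hf t u ht hu horth h h1 h2 h3 h4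
  have grad : ∀ k, (c : X.E →₀ ℝ) k
      = X.pot hconn x₀ c (X.t k) - X.pot hconn x₀ c (X.s k) :=
    X.pot_grad hconn x₀ c horth
  set g := X.pot hconn x₀ c with hg
  have hReach_g : ∀ {v w : X.V}, X.Reach e f v w → g v = g w :=
    fun hr => X.pot_reach hconn x₀ c horth e f hsupp hr
  have ht1 := ht.1
  have ht2 := ht.2
  have hu1 := hu.1
  have hu2 := hu.2
  by_contra ha0
  have hRx : ¬ X.Reach e f (X.t e) x := by
    intro hr
    apply ha0
    have hge := grad e
    rw [he, hReach_g hr] at hge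
    rw [hge]
    ring
  obtain ⟨γe, hγe, hne1, hne2⟩ := not_not.mp (hbr e)
  rw [he] at hγe
  have hav : ∀ k ∈ γe, k ≠ e ∧ k ≠ X.inv e :=
    fun k hk => ⟨fun hh => hne1 (hh ▸ hk), fun hh => hne2 (hh ▸ hk)⟩
  by_cases hdeg : f = e ∨ f = X.inv e
  · -- degenerate case : f ∈ {e, e⁻¹}
    have hP : ∀ k, k ≠ e → k ≠ X.inv e →
        X.Reach e f (X.t e) (X.s k) → X.Reach e f (X.t e) (X.t k) := by
      intro k k1 k2 hr
      refine X.reach_snoc hr k1 k2 ?_ ?_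
      · rcases hdeg with h | h
        · rw [h]; exact k1
        · rw [h]; exact k2
      · rcases hdeg with h | h
        · rw [h]; exact k2
        · rw [h, X.inv_inv]; exact k1
    exact hRx (X.closure e _ hP hγe hav (X.reach_refl e f (X.t e)))
  · push_neg at hdeg
    obtain ⟨hfe1, hfe2⟩ := hdeg
    -- integrality of c e - t
    obtain ⟨n, hn⟩ : ∃ n : ℤ, (c : X.E →₀ ℝ) e - t = (n : ℝ) := by
      obtain ⟨n1, hn1⟩ := X.pathChain_int α e
      obtain ⟨n2, hn2⟩ := X.pathChain_int β e
      refine ⟨n1 - n2, ?_⟩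
      have j1 : f ≠ e := hfe1
      have j2 : X.inv f ≠ e := fun hh => hfe2 (by rw [← hh, X.inv_inv])
      rw [hc]
      simp only [Submodule.coe_sub, Submodule.coe_add, Submodule.coe_smul,
        Finsupp.sub_apply, Finsupp.add_apply, Finsupp.smul_apply, smul_eq_mul,
        hn1, hn2, edgeChain_apply_self, coe_edgeChain, if_neg j1, if_neg j2]
      push_cast
      ring
    by_cases h1 : X.Reach e f (X.t e) x'
    · by_cases h2 : X.Reach e f (X.t e) (X.t f)
      · -- both reachable from t e : closure keeps us in the class of t e
        have hP : ∀ k, k ≠ e → k ≠ X.inv e →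
            X.Reach e f (X.t e) (X.s k) → X.Reach e f (X.t e) (X.t k) := by
          intro k k1 k2 hr
          by_cases k3 : k = f
          · rw [k3]; exact h2
          · by_cases k4 : k = X.inv f
            · rw [k4, X.t_inv, hf]; exact h1
            · exact X.reach_snoc hr k1 k2 k3 k4
        exact hRx (X.closure e _ hP hγe hav (X.reach_refl e f (X.t e)))
      · -- case (iii) : t e ~ x' and t f ~ x
        have hP : ∀ k, k ≠ e → k ≠ X.inv e →
            (X.Reach e f (X.t e) (X.s k) ∨ X.Reach e f (X.t f) (X.s k)) →
            (X.Reach e f (X.t e) (X.t k) ∨ X.Reach e f (X.t f) (X.t k)) := by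
          intro k k1 k2 hr
          by_cases k3 : k = f
          · right; rw [k3]; exact X.reach_refl e f (X.t f)
          · by_cases k4 : k = X.inv f
            · left; rw [k4, X.t_inv, hf]; exact h1
            · rcases hr with hr | hr
              · exact Or.inl (X.reach_snoc hr k1 k2 k3 k4)
              · exact Or.inr (X.reach_snoc hr k1 k2 k3 k4)
        have hPx := X.closure e
          (fun v => X.Reach e f (X.t e) v ∨ X.Reach e f (X.t f) v) hP hγe hav
          (Or.inl (X.reach_refl e f (X.t e)))
        have hRfx : X.Reach e f (X.t f) x := hPx.resolve_left hRx
        have g1 : g (X.t f) = g x := hReach_g hRfx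
        have g2 : g (X.t e) = g x' := hReach_g h1
        set φ : X.V → ℝ := fun v => if X.Reach e f (X.t e) v then 1 else 0 with hφ
        have φte : φ (X.t e) = 1 := by rw [hφ]; simp [X.reach_refl]
        have φx : φ x = 0 := by rw [hφ]; simp [hRx]
        have φx' : φ x' = 1 := by rw [hφ]; simp [h1]
        have φtf : φ (X.t f) = 0 := by rw [hφ]; simp [h2]
        have hF := X.wayA hα hβ e f t u φ
        rw [← hc, he, hf] at hF
        have hF2 := X.wayB4 c e f hfe1 hfe2 hsupp φ
        rw [he, hf, hF] at hF2
        rw [φte, φx, φx', φtf] at hF2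
        have hbf : (c : X.E →₀ ℝ) f = - (c : X.E →₀ ℝ) e := by
          have ge' := grad e
          rw [he] at ge'
          have gf' := grad f
          rw [hf] at gf'
          rw [ge', gf', g1, g2]
          ring
        rw [hbf] at hF2
        -- hF2 : linear equation; conclude
        have hn01 : n = 0 ∨ n = -1 := by
          have l1 : (-2 : ℝ) ≤ 2*(n:ℝ) := by linarith [hu.1, ht.2, hn, hF2]
          have l2 : (2*(n:ℝ)) ≤ 0 := by linarith [hu.2, ht.1, hn, hF2]
          have l1' : (-2 : ℤ) ≤ 2*n := by exact_mod_cast l1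
          have l2' : (2*n : ℤ) ≤ 0 := by exact_mod_cast l2
          omega
        apply ha0
        rcases hn01 with rfl | rfl
        · push_cast at hn
          have htu : u - t = 1 := by linarith [hF2]
          have ht0 : t = 0 := by linarith [hu.2]
          linarith [hn]
        · push_cast at hn
          have htu : u - t = -1 := by linarith [hF2]
          have ht1 : t = 1 := by linarith [hu.1]
          linarith [hn]
    · by_cases h2 : X.Reach e f (X.t e) (X.t f)
      · -- case (iv) : t e ~ t f and x ~ x'
        have hP : ∀ k, k ≠ e → k ≠ X.inv e →
            (X.Reach e f (X.t e) (X.s k) ∨ X.Reach e f x' (X.s k)) →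
            (X.Reach e f (X.t e) (X.t k) ∨ X.Reach e f x' (X.t k)) := by
          intro k k1 k2 hr
          by_cases k3 : k = f
          · left; rw [k3]; exact h2
          · by_cases k4 : k = X.inv f
            · right; rw [k4, X.t_inv, hf]; exact X.reach_refl e f x'
            · rcases hr with hr | hr
              · exact Or.inl (X.reach_snoc hr k1 k2 k3 k4)
              · exact Or.inr (X.reach_snoc hr k1 k2 k3 k4)
        have hPx := X.closure e
          (fun v => X.Reach e f (X.t e) v ∨ X.Reach e f x' v) hP hγe hav
          (Or.inl (X.reach_refl e f (X.t e)))
        have hRx'x : X.Reach e f x' x := hPx.resolve_left hRx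
        have g1 : g x' = g x := hReach_g hRx'x
        have g2 : g (X.t e) = g (X.t f) := hReach_g h2
        set φ : X.V → ℝ := fun v => if X.Reach e f (X.t e) v then 1 else 0 with hφ
        have φte : φ (X.t e) = 1 := by rw [hφ]; simp [X.reach_refl]
        have φx : φ x = 0 := by rw [hφ]; simp [hRx]
        have φx' : φ x' = 0 := by rw [hφ]; simp [h1]
        have φtf : φ (X.t f) = 1 := by rw [hφ]; simp [h2]
        have hF := X.wayA hα hβ e f t u φ
        rw [← hc, he, hf] at hF
        have hF2 := X.wayB4 c e f hfe1 hfe2 hsupp φ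
        rw [he, hf, hF] at hF2
        rw [φte, φx, φx', φtf] at hF2
        have hbf : (c : X.E →₀ ℝ) f = (c : X.E →₀ ℝ) e := by
          have ge' := grad e
          rw [he] at ge'
          have gf' := grad f
          rw [hf] at gf'
          rw [ge', gf', g1, g2]
        rw [hbf] at hF2
        have hn01 : n = 0 ∨ n = -1 := by
          have l1 : (-2 : ℝ) ≤ 2*(n:ℝ) := by linarith [hu.2, ht.2, hn, hF2]
          have l2 : (2*(n:ℝ)) ≤ 0 := by linarith [hu.1, ht.1, hn, hF2]
          have l1' : (-2 : ℤ) ≤ 2*n := by exact_mod_cast l1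
          have l2' : (2*n : ℤ) ≤ 0 := by exact_mod_cast l2
          omega
        apply ha0
        rcases hn01 with rfl | rfl
        · push_cast at hn
          have ht0 : t = 0 := by linarith [hF2, hu.1, ht.1]
          linarith [hn]
        · push_cast at hn
          have ht1 : t = 1 := by linarith [hF2, hu.2, ht.2]
          linarith [hn]
      · -- neither : class of t e is closed
        have hP : ∀ k, k ≠ e → k ≠ X.inv e →
            X.Reach e f (X.t e) (X.s k) → X.Reach e f (X.t e) (X.t k) := by
          intro k k1 k2 hr
          by_cases k3 : k = f
          · rw [k3, hf] at hr
            exact absurd hr h1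
          · by_cases k4 : k = X.inv f
            · rw [k4, X.s_inv] at hr
              exact absurd hr h2
            · exact X.reach_snoc hr k1 k2 k3 k4
        exact hRx (X.closure e _ hP hγe hav (X.reach_refl e f (X.t e)))

end SunadaGraph


set_option maxHeartbeats 1600000 in
/-- In a connected bridgeless graph with basepoint `x₀`, if the 1-chain
`(c_α + t·e) − (c_β + u·f)` is orthogonal to every 1-cycle (where `α : x₀ → x`,
`β : x₀ → x'`, `s(e) = x`, `s(f) = x'`, `t, u ∈ [0,1]`), then `c_α + t·e = c_β + u·f`. -/
theorem bond_points_eq_of_orthogonal (X : SunadaGraph) (hconn : X.Connected)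
    (hbr : ∀ e : X.E, ¬ X.IsBridge e) (x₀ x x' : X.V)
    (α β : List X.E) (hα : X.IsPath x₀ x α) (hβ : X.IsPath x₀ x' β)
    (e f : X.E) (he : X.s e = x) (hf : X.s f = x')
    (t u : ℝ) (ht : t ∈ Set.Icc (0:ℝ) 1) (hu : u ∈ Set.Icc (0:ℝ) 1)
    (horth : ∀ z : ↥X.C1, X.IsCycle z →
      X.chainInner ((X.pathChain α + t • X.edgeChain e)
        - (X.pathChain β + u • X.edgeChain f)) z = 0) :
    X.pathChain α + t • X.edgeChain e = X.pathChain β + u • X.edgeChain f := by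
  classical
  have horth' : ∀ z : ↥X.C1, X.IsCycle z →
      X.chainInner ((X.pathChain β + u • X.edgeChain f)
        - (X.pathChain α + t • X.edgeChain e)) z = 0 := by
    intro z hz
    have h0 := horth z hz
    have hneg : (X.pathChain β + u • X.edgeChain f)
        - (X.pathChain α + t • X.edgeChain e)
        = -((X.pathChain α + t • X.edgeChain e)
            - (X.pathChain β + u • X.edgeChain f)) := by abel
    rw [hneg, X.chainInner_neg_left, h0, neg_zero]
  have hkey1 := X.key_coeff hconn hbr x₀ x x' α β hα hβ e f he hf t u ht hu horth
  have hkey2 := X.key_coeff hconn hbr x₀ x' x β α hβ hα f e hf he u t hu ht horth'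
  have hsupp := X.supp_zero hconn hbr x₀ x x' α β hα hβ e f he hf t u ht hu horth
  rw [← sub_eq_zero]
  set c : ↥X.C1 :=
    X.pathChain α + t • X.edgeChain e - (X.pathChain β + u • X.edgeChain f) with hc
  have hcf : (c : X.E →₀ ℝ) f = 0 := by
    have hneg : ((X.pathChain β + u • X.edgeChain f
        - (X.pathChain α + t • X.edgeChain e) : ↥X.C1) : X.E →₀ ℝ) f
        = - (c : X.E →₀ ℝ) f := by
      rw [hc]
      simp only [Submodule.coe_sub, Submodule.coe_add, Finsupp.sub_apply,
        Finsupp.add_apply]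
      ring
    rw [hneg] at hkey2
    linarith
  refine Subtype.ext (Finsupp.ext fun k => ?_)
  have hz : ((0 : ↥X.C1) : X.E →₀ ℝ) k = 0 := by simp
  rw [hz]
  by_cases k1 : k = e
  · rw [k1]; exact hkey1
  by_cases k2 : k = X.inv e
  · rw [k2, X.mem_C1 c e, hkey1, neg_zero]
  by_cases k3 : k = f
  · rw [k3]; exact hcf
  by_cases k4 : k = X.inv f
  · rw [k4, X.mem_C1 c f, hcf, neg_zero]
  · exact hsupp k k1 k2 k3 k4
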